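/- Let n ≥ 1 and N ≥ 1 be integers and let {U_{ij} : 1 ≤ i ≤ n, 1 ≤ j ≤ N} be independent random variables, each uniformly distributed on [0,1]. Then for every ε ∈ (0,1): ℙ( 1 − ∏_{i=1}^{n} max_{1≤j≤N} U_{ij} > ε ) = Σ_{i=0}^{n−1} (N·λ)^i / i! · e^{−N·λ}, where λ = log(1/(1−ε)). -/

import Mathlib

open MeasureTheory ProbabilityTheory Real
open Set

/-- lintegral of `ofReal f` over `Icc`/`Ico` via interval integral. -/
lemma lint_ofReal_Ioc (a b : ℝ) (hab : a ≤ b) (f : ℝ → ℝ)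
    (hf : ContinuousOn f (Icc a b)) (h0 : ∀ x ∈ Icc a b, 0 ≤ f x) :
    ∫⁻ x in Ioc a b, ENNReal.ofReal (f x) = ENNReal.ofReal (∫ x in a..b, f x) := by
  rw [intervalIntegral.integral_of_le hab]
  refine (ofReal_integral_eq_lintegral_ofReal ?_ ?_).symm
  · exact (hf.integrableOn_Icc).mono_set Ioc_subset_Icc_self
  · exact (ae_restrict_iff' measurableSet_Ioc).2
      (ae_of_all _ fun x hx => h0 x (Ioc_subset_Icc_self hx))

lemma lint_ofReal_Icc (a b : ℝ) (hab : a ≤ b) (f : ℝ → ℝ)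
    (hf : ContinuousOn f (Icc a b)) (h0 : ∀ x ∈ Icc a b, 0 ≤ f x) :
    ∫⁻ x in Icc a b, ENNReal.ofReal (f x) = ENNReal.ofReal (∫ x in a..b, f x) := by
  rw [← lint_ofReal_Ioc a b hab f hf h0]
  exact setLIntegral_congr (Ioc_ae_eq_Icc).symm

lemma lint_ofReal_Ico (a b : ℝ) (hab : a ≤ b) (f : ℝ → ℝ)
    (hf : ContinuousOn f (Icc a b)) (h0 : ∀ x ∈ Icc a b, 0 ≤ f x) :
    ∫⁻ x in Ico a b, ENNReal.ofReal (f x) = ENNReal.ofReal (∫ x in a..b, f x) := by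
  rw [← lint_ofReal_Ioc a b hab f hf h0]
  exact setLIntegral_congr Ico_ae_eq_Ioc

noncomputable def nuD (K : ℕ) : Measure ℝ :=
  (volume.restrict (Set.Icc (0 : ℝ) 1)).withDensity
    (fun x => ENNReal.ofReal ((K + 1 : ℝ) * x ^ K))

lemma nuD_apply (K : ℕ) {s : Set ℝ} (hs : MeasurableSet s) :
    nuD K s = ∫⁻ x in s ∩ Icc (0:ℝ) 1, ENNReal.ofReal ((K + 1 : ℝ) * x ^ K) := by
  rw [nuD, withDensity_apply _ hs, Measure.restrict_restrict hs]

lemma contOn_dens (K : ℕ) {s : Set ℝ} : ContinuousOn (fun x : ℝ => (K + 1 : ℝ) * x ^ K) s :=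
  (continuous_const.mul (continuous_pow K)).continuousOn

lemma dens_nonneg (K : ℕ) {x : ℝ} (hx : x ∈ Icc (0:ℝ) 1) : 0 ≤ (K + 1 : ℝ) * x ^ K :=
  mul_nonneg (by positivity) (pow_nonneg hx.1 K)

lemma nuD_Icc01 (K : ℕ) : nuD K (Icc (0:ℝ) 1) = 1 := by
  rw [nuD_apply K measurableSet_Icc, Set.inter_self,
    lint_ofReal_Icc 0 1 zero_le_one _ (contOn_dens K) (fun x hx => dens_nonneg K hx)]
  rw [intervalIntegral.integral_const_mul, integral_pow]
  have : ((K:ℝ)+1) ≠ 0 := by positivity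
  field_simp
  simp

lemma nuD_univ (K : ℕ) : nuD K univ = 1 := by
  rw [nuD_apply K MeasurableSet.univ, Set.univ_inter, ← Set.inter_self (Icc (0:ℝ) 1),
    ← nuD_apply K measurableSet_Icc, nuD_Icc01]

lemma nuD_prob (K : ℕ) : IsProbabilityMeasure (nuD K) := ⟨nuD_univ K⟩

lemma nuD_Iic (K : ℕ) (x : ℝ) : nuD K (Iic x) = ENNReal.ofReal (min x 1) ^ (K + 1) := by
  have hset : Iic x ∩ Icc (0:ℝ) 1 = Icc 0 (min x 1) := by
    ext y; simp only [mem_inter_iff, mem_Iic, mem_Icc, le_min_iff]; tauto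
  rw [nuD_apply K measurableSet_Iic, hset]
  rcases le_or_gt 0 x with hx | hx
  · have hmin : (0:ℝ) ≤ min x 1 := le_min hx zero_le_one
    rw [lint_ofReal_Icc 0 (min x 1) hmin _ (contOn_dens K)
        (fun y hy => mul_nonneg (by positivity) (pow_nonneg hy.1 K)),
      intervalIntegral.integral_const_mul, integral_pow, ← ENNReal.ofReal_pow hmin]
    have : ((K:ℝ)+1) ≠ 0 := by positivity
    norm_num
    congr 1
    field_simp
  · have hmin : min x 1 < 0 := by simp [hx, min_lt_iff]
    rw [Set.Icc_eq_empty (not_le.2 hmin)]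
    simp [ENNReal.ofReal_of_nonpos hmin.le]

lemma integral_piece (K n : ℕ) {t : ℝ} (ht0 : 0 < t) (ht1 : t ≤ 1) :
    ∫ x in t..(1:ℝ), (K + 1 : ℝ) * x ^ K *
      ((t / x) ^ (K + 1) *
        ∑ i ∈ Finset.range n, ((K + 1 : ℝ) * Real.log (x / t)) ^ i / (Nat.factorial i : ℝ))
    = ∑ i ∈ Finset.range n,
        t ^ (K + 1) * ((K + 1 : ℝ) * Real.log (1 / t)) ^ (i + 1)
          / (((i : ℝ) + 1) * (Nat.factorial i : ℝ)) := by
  have huIcc : uIcc t (1:ℝ) = Icc t 1 := uIcc_of_le ht1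
  set c : ℝ := (K + 1 : ℝ) with hc
  set φ : ℕ → ℝ → ℝ := fun i x =>
    t ^ (K + 1) * ((((i : ℝ) + 1) * (c * (Real.log x - Real.log t)) ^ i) * (c * x⁻¹))
      / (((i : ℝ) + 1) * (Nat.factorial i : ℝ)) with hφ
  set F : ℕ → ℝ → ℝ := fun i x =>
    t ^ (K + 1) * (c * (Real.log x - Real.log t)) ^ (i + 1)
      / (((i : ℝ) + 1) * (Nat.factorial i : ℝ)) with hF
  have hx0 : ∀ x ∈ Icc t (1:ℝ), 0 < x := fun x hx => lt_of_lt_of_le ht0 hx.1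
  have heq : EqOn (fun x => (K + 1 : ℝ) * x ^ K *
      ((t / x) ^ (K + 1) *
        ∑ i ∈ Finset.range n, ((K + 1 : ℝ) * Real.log (x / t)) ^ i / (Nat.factorial i : ℝ)))
      (fun x => ∑ i ∈ Finset.range n, φ i x) (uIcc t 1) := by
    intro x hx
    rw [huIcc] at hx
    have hx0' : (0:ℝ) < x := hx0 x (huIcc ▸ hx)
    have hlog : Real.log (x / t) = Real.log x - Real.log t := Real.log_div hx0'.ne' ht0.ne'
    simp only [hlog, hφ]
    rw [Finset.mul_sum, Finset.mul_sum]
    refine Finset.sum_congr rfl fun i _ => ?_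
    have hfac : (Nat.factorial i : ℝ) ≠ 0 := Nat.cast_ne_zero.2 (Nat.factorial_ne_zero i)
    have hi1 : ((i : ℝ) + 1) ≠ 0 := by positivity
    have hxne : x ≠ 0 := hx0'.ne'
    have htne : t ≠ 0 := ht0.ne'
    simp only [hc]
    field_simp
    rw [div_pow]
    field_simp
    ring
  rw [intervalIntegral.integral_congr heq]
  have hcont : ∀ i, ContinuousOn (φ i) (uIcc t 1) := by
    intro i
    rw [huIcc]
    apply ContinuousOn.div_const
    apply ContinuousOn.mul continuousOn_const
    apply ContinuousOn.mul
    · exact continuousOn_const.mul ((continuousOn_const.mul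
        ((Real.continuousOn_log.mono (fun x hx => (hx0 x hx).ne')).sub continuousOn_const)).pow i)
    · exact continuousOn_const.mul (continuousOn_inv₀.mono (fun x hx => (hx0 x hx).ne'))
  rw [intervalIntegral.integral_finset_sum (fun i _ => (hcont i).intervalIntegrable)]
  refine Finset.sum_congr rfl fun i _ => ?_
  have hderiv : ∀ x ∈ uIcc t (1:ℝ), HasDerivAt (F i) (φ i x) x := by
    intro x hx
    have hx0' : (0:ℝ) < x := hx0 x (huIcc ▸ hx)
    have h1 : HasDerivAt (fun y => c * (Real.log y - Real.log t)) (c * x⁻¹) x :=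
      ((Real.hasDerivAt_log hx0'.ne').sub_const _).const_mul c
    have h2 := h1.pow (i + 1)
    have h3 := (h2.const_mul (t ^ (K + 1))).div_const (((i : ℝ) + 1) * (Nat.factorial i : ℝ))
    refine h3.congr_deriv ?_
    simp only [hφ, Nat.add_sub_cancel]
    push_cast
    ring
  rw [intervalIntegral.integral_eq_sub_of_hasDerivAt hderiv (hcont i).intervalIntegrable]
  rw [hF]
  simp only [Real.log_one, one_div, Real.log_inv, sub_self, zero_sub]
  rw [mul_zero, zero_pow (Nat.succ_ne_zero i)]
  ring

lemma measurable_prodFun (n : ℕ) : Measurable (fun v : Fin n → ℝ => ∏ i, v i) :=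
  Finset.measurable_prod _ (fun i _ => measurable_pi_apply i)

lemma prodSet_measurable (n : ℕ) (t : ℝ) :
    MeasurableSet {v : Fin n → ℝ | ∏ i, v i < t} :=
  (measurable_prodFun n) measurableSet_Iio

/-- Full measure when `1 < s`. -/
lemma pi_nuD_full (K n : ℕ) {s : ℝ} (hs : 1 < s) :
    Measure.pi (fun _ : Fin n => nuD K) {v | ∏ i, v i < s} = 1 := by
  haveI : IsProbabilityMeasure (nuD K) := nuD_prob K
  haveI : IsProbabilityMeasure (Measure.pi (fun _ : Fin n => nuD K)) := inferInstance
  refine le_antisymm prob_le_one ?_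
  have hsub : Set.pi univ (fun _ : Fin n => Icc (0:ℝ) 1) ⊆ {v | ∏ i, v i < s} := by
    intro v hv
    have h1 : ∏ i, v i ≤ 1 :=
      Finset.prod_le_one (fun i _ => (hv i (mem_univ i)).1) (fun i _ => (hv i (mem_univ i)).2)
    exact lt_of_le_of_lt h1 hs
  calc (1 : ENNReal) = Measure.pi (fun _ : Fin n => nuD K) (Set.pi univ fun _ => Icc (0:ℝ) 1) := by
        rw [Measure.pi_pi]; simp [nuD_Icc01 K]
    _ ≤ _ := measure_mono hsub

lemma pi_nuD_of_box_subset (K n : ℕ) {S : Set (Fin n → ℝ)}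
    (h : Set.pi univ (fun _ : Fin n => Icc (0:ℝ) 1) ⊆ S) :
    Measure.pi (fun _ : Fin n => nuD K) S = 1 := by
  haveI : IsProbabilityMeasure (nuD K) := nuD_prob K
  haveI : IsProbabilityMeasure (Measure.pi (fun _ : Fin n => nuD K)) := inferInstance
  refine le_antisymm prob_le_one ?_
  calc (1 : ENNReal) = Measure.pi (fun _ : Fin n => nuD K) (Set.pi univ fun _ => Icc (0:ℝ) 1) := by
        rw [Measure.pi_pi]; simp [nuD_Icc01 K]
    _ ≤ _ := measure_mono h

lemma core (K : ℕ) : ∀ (n : ℕ) (t : ℝ), 0 < t → t ≤ 1 →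
    Measure.pi (fun _ : Fin n => nuD K) {v | ∏ i, v i < t}
      = ENNReal.ofReal (t ^ (K + 1) *
          ∑ i ∈ Finset.range n, ((K + 1 : ℝ) * Real.log (1 / t)) ^ i / (Nat.factorial i : ℝ)) := by
  intro n
  induction n with
  | zero =>
    intro t ht0 ht1
    have h : {v : Fin 0 → ℝ | ∏ i, v i < t} = ∅ := by
      ext v; simp [ht1.not_gt]
    rw [h, measure_empty]
    simp
  | succ n ih =>
    intro t ht0 ht1
    haveI : IsProbabilityMeasure (nuD K) := nuD_prob K
    have hlam0 : 0 ≤ Real.log (1 / t) :=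
      Real.log_nonneg (by rw [le_div_iff₀ ht0]; simpa using ht1)
    set T : Set (ℝ × (Fin n → ℝ)) := {p | p.1 * ∏ j, p.2 j < t} with hT
    have hTm : MeasurableSet T :=
      (measurable_fst.mul ((measurable_prodFun n).comp measurable_snd)) measurableSet_Iio
    have hpre : {v : Fin (n+1) → ℝ | ∏ i, v i < t}
        = (MeasurableEquiv.piFinSuccAbove (fun _ => ℝ) 0) ⁻¹' T := by
      ext v
      simp only [mem_setOf_eq, mem_preimage, MeasurableEquiv.piFinSuccAbove, hT,
        MeasurableEquiv.coe_mk, MeasurableEquiv.piFinSuccAbove_apply]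
      rw [Fin.prod_univ_succ]
      simp [Fin.succAbove_zero, Fin.tail]
    have hmp := measurePreserving_piFinSuccAbove (fun _ : Fin (n+1) => nuD K) 0
    have step1 : Measure.pi (fun _ : Fin (n+1) => nuD K) {v | ∏ i, v i < t}
        = ((nuD K).prod (Measure.pi fun _ : Fin n => nuD K)) T := by
      rw [hpre]
      exact hmp.measure_preimage hTm.nullMeasurableSet
    rw [step1, Measure.prod_apply hTm]
    set g : ℝ → ENNReal := fun x => (Measure.pi fun _ : Fin n => nuD K) (Prod.mk x ⁻¹' T) with hg
    set d : ℝ → ENNReal := fun x => ENNReal.ofReal ((K + 1 : ℝ) * x ^ K) with hd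
    have hgm : Measurable g := measurable_measure_prodMk_left hTm
    have hdm : Measurable d :=
      ENNReal.measurable_ofReal.comp ((continuous_const.mul (continuous_pow K)).measurable)
    rw [nuD, lintegral_withDensity_eq_lintegral_mul _ hdm hgm]
    have hsplit : Icc (0:ℝ) 1 = Ico 0 t ∪ Icc t 1 := (Ico_union_Icc_eq_Icc ht0.le ht1).symm
    have hdisj : Disjoint (Ico (0:ℝ) t) (Icc t 1) := by
      rw [Set.disjoint_left]; rintro x ⟨_, h2⟩ ⟨h3, _⟩; exact absurd h3 (not_le.2 h2)
    rw [hsplit, lintegral_union measurableSet_Icc hdisj]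
    have hpiece1 : ∫⁻ x in Ico (0:ℝ) t, (d * g) x = ENNReal.ofReal (t ^ (K + 1)) := by
      have hfun : ∀ x ∈ Ico (0:ℝ) t, (d * g) x = ENNReal.ofReal ((K + 1 : ℝ) * x ^ K) := by
        intro x hx
        have hg1 : g x = 1 := by
          refine pi_nuD_of_box_subset K n (fun w hw => ?_)
          have hle1 : ∏ j, w j ≤ 1 :=
            Finset.prod_le_one (fun j _ => (hw j (mem_univ j)).1) (fun j _ => (hw j (mem_univ j)).2)
          have : x * ∏ j, w j ≤ x := mul_le_of_le_one_right hx.1 hle1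
          exact lt_of_le_of_lt this hx.2
        simp [hg1, hd]
      rw [setLIntegral_congr_fun measurableSet_Ico hfun,
        lint_ofReal_Ico 0 t ht0.le _ (contOn_dens K)
          (fun x hx => mul_nonneg (by positivity) (pow_nonneg hx.1 K)),
        intervalIntegral.integral_const_mul, integral_pow]
      have : ((K:ℝ)+1) ≠ 0 := by positivity
      norm_num
      congr 1
      field_simp
    have hpiece2 : ∫⁻ x in Icc t 1, (d * g) x
        = ENNReal.ofReal (∑ i ∈ Finset.range n,
            t ^ (K + 1) * ((K + 1 : ℝ) * Real.log (1 / t)) ^ (i + 1)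
              / (((i : ℝ) + 1) * (Nat.factorial i : ℝ))) := by
      set h : ℝ → ℝ := fun x => (K + 1 : ℝ) * x ^ K *
        ((t / x) ^ (K + 1) *
          ∑ i ∈ Finset.range n, ((K + 1 : ℝ) * Real.log (x / t)) ^ i / (Nat.factorial i : ℝ))
        with hh
      have hfun : ∀ x ∈ Icc t (1:ℝ), (d * g) x = ENNReal.ofReal (h x) := by
        intro x hx
        have hx0' : (0:ℝ) < x := lt_of_lt_of_le ht0 hx.1
        have hset : Prod.mk x ⁻¹' T = {w : Fin n → ℝ | ∏ j, w j < t / x} := by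
          ext w
          simp only [mem_preimage, hT, mem_setOf_eq]
          rw [lt_div_iff₀ hx0', mul_comm]
        have hval : g x = ENNReal.ofReal ((t / x) ^ (K + 1) *
            ∑ i ∈ Finset.range n, ((K + 1 : ℝ) * Real.log (1 / (t / x))) ^ i
              / (Nat.factorial i : ℝ)) := by
          simp only [hg, hset]
          exact ih (t / x) (div_pos ht0 hx0') ((div_le_one hx0').2 hx.1)
        rw [Pi.mul_apply, hval, hd, hh]
        rw [one_div_div]
        rw [← ENNReal.ofReal_mul (mul_nonneg (by positivity) (pow_nonneg hx0'.le K))]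
      have hcont : ContinuousOn h (Icc t 1) := by
        have hne : ∀ x ∈ Icc t (1:ℝ), x ≠ 0 := fun x hx => (lt_of_lt_of_le ht0 hx.1).ne'
        refine (contOn_dens K).mul (ContinuousOn.mul ?_ ?_)
        · exact ((continuousOn_const.div continuousOn_id hne).pow (K + 1))
        · refine continuousOn_finset_sum _ (fun i _ => ContinuousOn.div_const ?_ _)
          refine ContinuousOn.pow (continuousOn_const.mul (ContinuousOn.log ?_ ?_)) i
          · exact continuousOn_id.div_const t
          · exact fun x hx => div_ne_zero (hne x hx) ht0.ne'
      have hnonneg : ∀ x ∈ Icc t (1:ℝ), 0 ≤ h x := by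
        intro x hx
        have hx0' : (0:ℝ) < x := lt_of_lt_of_le ht0 hx.1
        have hlog : 0 ≤ Real.log (x / t) := Real.log_nonneg ((one_le_div ht0).2 hx.1)
        refine mul_nonneg (mul_nonneg (by positivity) (pow_nonneg hx0'.le K))
          (mul_nonneg (by positivity) (Finset.sum_nonneg fun i _ => ?_))
        exact div_nonneg (pow_nonneg (mul_nonneg (by positivity) hlog) i) (by positivity)
      rw [setLIntegral_congr_fun measurableSet_Icc hfun,
        lint_ofReal_Icc t 1 ht1 h hcont hnonneg, hh, integral_piece K n ht0 ht1]
    rw [hpiece1, hpiece2,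
      ← ENNReal.ofReal_add (by positivity) (Finset.sum_nonneg fun i _ =>
        div_nonneg (mul_nonneg (pow_nonneg ht0.le _)
          (pow_nonneg (mul_nonneg (by positivity) hlam0) _)) (by positivity))]
    congr 1
    rw [Finset.mul_sum, Finset.sum_range_succ']
    simp only [pow_zero, Nat.factorial_zero, Nat.cast_one, div_one, mul_one]
    rw [add_comm]
    congr 1
    refine Finset.sum_congr rfl fun i _ => ?_
    rw [Nat.factorial_succ]
    push_cast
    ring

lemma unif_Iic (x : ℝ) : volume.restrict (Icc (0:ℝ) 1) (Iic x) = ENNReal.ofReal (min x 1) := by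
  rw [Measure.restrict_apply measurableSet_Iic]
  have h : Iic x ∩ Icc (0:ℝ) 1 = Icc 0 (min x 1) := by
    ext y; simp only [mem_inter_iff, mem_Iic, mem_Icc, le_min_iff]; tauto
  rw [h, Real.volume_Icc]
  norm_num

open ProbabilityTheory in
lemma map_max_eq_pi {Ω : Type*} [MeasurableSpace Ω] (P : Measure Ω) [IsProbabilityMeasure P]
    (n K : ℕ) (U : Fin n → Fin (K+1) → Ω → ℝ)
    (hmeas : ∀ i j, Measurable (U i j))
    (hindep : iIndepFun (fun p : Fin n × Fin (K+1) => U p.1 p.2) P)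
    (hunif : ∀ i j, Measure.map (U i j) P = volume.restrict (Set.Icc (0 : ℝ) 1)) :
    Measure.pi (fun _ : Fin n => nuD K) = P.map (fun ω i => ⨆ j, U i j ω) := by
  haveI : IsProbabilityMeasure (nuD K) := nuD_prob K
  have hMm : Measurable (fun ω (i : Fin n) => ⨆ j, U i j ω) :=
    measurable_pi_lambda _ (fun i => Measurable.iSup (fun j => hmeas i j))
  refine Measure.pi_eq_generateFrom
    (fun _ => (borel_eq_generateFrom_Iic ℝ).symm.trans BorelSpace.measurable_eq.symm)
    (fun _ => isPiSystem_Iic)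
    (fun _ => ⟨fun k => Iic (k : ℝ), fun k => mem_range_self _,
      fun k => measure_lt_top _ _,
      eq_univ_iff_forall.2 fun x => mem_iUnion.2 ⟨⌈x⌉₊, Nat.le_ceil x⟩⟩)
    (fun s hs => ?_)
  choose x hx using hs
  rw [Measure.map_apply hMm
    (MeasurableSet.univ_pi (fun i => (hx i) ▸ measurableSet_Iic))]
  have hpre : (fun ω (i : Fin n) => ⨆ j, U i j ω) ⁻¹' (univ.pi s)
      = ⋂ p : Fin n × Fin (K+1), U p.1 p.2 ⁻¹' Iic (x p.1) := by
    ext ω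
    simp only [mem_preimage, mem_pi, mem_univ, forall_true_left, mem_iInter]
    have key : ∀ i : Fin n, ((⨆ j, U i j ω) ≤ x i ↔ ∀ j, U i j ω ≤ x i) :=
      fun i => ciSup_le_iff (Set.Finite.bddAbove (finite_range _))
    constructor
    · intro h p
      have := h p.1
      rw [← hx p.1, mem_Iic, key p.1] at this
      exact this p.2
    · intro h i
      rw [← hx i, mem_Iic, key i]
      exact fun j => h (i, j)
  have hbig : (⋂ p : Fin n × Fin (K+1), U p.1 p.2 ⁻¹' Iic (x p.1))
      = ⋂ p ∈ (Finset.univ : Finset (Fin n × Fin (K+1))), U p.1 p.2 ⁻¹' Iic (x p.1) := by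
    simp
  rw [hpre, hbig,
    hindep.measure_inter_preimage_eq_mul Finset.univ (fun p _ => measurableSet_Iic)]
  have hfac : ∀ p : Fin n × Fin (K+1),
      P (U p.1 p.2 ⁻¹' Iic (x p.1)) = ENNReal.ofReal (min (x p.1) 1) := by
    intro p
    rw [← Measure.map_apply (hmeas p.1 p.2) measurableSet_Iic, hunif p.1 p.2, unif_Iic]
  calc ∏ p : Fin n × Fin (K+1), P (U p.1 p.2 ⁻¹' Iic (x p.1))
      = ∏ i : Fin n, ∏ j : Fin (K+1), ENNReal.ofReal (min (x i) 1) := by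
        rw [Fintype.prod_prod_type]
        exact Finset.prod_congr rfl fun i _ => Finset.prod_congr rfl fun j _ => hfac (i, j)
    _ = ∏ i : Fin n, nuD K (s i) := by
        refine Finset.prod_congr rfl fun i _ => ?_
        rw [Finset.prod_const, Finset.card_univ, Fintype.card_fin, ← hx i, nuD_Iic]


/-- Exact violation probability in the verifiable example.
If `U_{ij}`, `1 ≤ i ≤ n`, `1 ≤ j ≤ N`, are independent Uniform[0,1] random variables, then
for every `ε ∈ (0,1)`,
`ℙ(1 − ∏_i max_j U_{ij} > ε) = Σ_{i=0}^{n−1} (Nλ)^i/i! · e^{−Nλ}` with `λ = log(1/(1−ε))`. -/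
theorem statement_18 {Ω : Type*} [MeasurableSpace Ω] (P : Measure Ω) [IsProbabilityMeasure P]
    (n N : ℕ) (hn : 1 ≤ n) (hN : 1 ≤ N)
    (U : Fin n → Fin N → Ω → ℝ)
    (hmeas : ∀ i j, Measurable (U i j))
    (hindep : iIndepFun (fun p : Fin n × Fin N => U p.1 p.2) P)
    (hunif : ∀ i j, Measure.map (U i j) P = volume.restrict (Set.Icc (0 : ℝ) 1))
    (ε : ℝ) (hε : ε ∈ Set.Ioo (0 : ℝ) 1) :
    P {ω | ε < 1 - ∏ i : Fin n, ⨆ j : Fin N, U i j ω} =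
      ENNReal.ofReal (∑ i ∈ Finset.range n,
        ((N : ℝ) * Real.log (1 / (1 - ε))) ^ i / (Nat.factorial i : ℝ) *
          Real.exp (-((N : ℝ) * Real.log (1 / (1 - ε))))) := by
  obtain ⟨K, rfl⟩ : ∃ K, N = K + 1 := ⟨N - 1, (Nat.succ_pred_eq_of_pos hN).symm⟩
  obtain ⟨hε0, hε1⟩ := hε
  have ht0 : (0:ℝ) < 1 - ε := by linarith
  have ht1 : (1:ℝ) - ε ≤ 1 := by linarith
  have hMm : Measurable (fun ω (i : Fin n) => ⨆ j, U i j ω) :=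
    measurable_pi_lambda _ (fun i => Measurable.iSup (fun j => hmeas i j))
  have hev : {ω | ε < 1 - ∏ i : Fin n, ⨆ j : Fin (K+1), U i j ω}
      = (fun ω (i : Fin n) => ⨆ j, U i j ω) ⁻¹' {v | ∏ i, v i < 1 - ε} := by
    ext ω
    simp only [mem_setOf_eq, mem_preimage]
    constructor <;> intro h <;> linarith
  rw [hev, ← Measure.map_apply hMm (prodSet_measurable n (1 - ε)),
    ← map_max_eq_pi P n K U hmeas hindep hunif, core K n (1 - ε) ht0 ht1]
  congr 1
  have hexp : Real.exp (-((((K:ℕ)+1 : ℕ) : ℝ) * Real.log (1 / (1 - ε)))) = (1 - ε) ^ (K + 1) := by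
    rw [one_div, Real.log_inv, mul_neg, neg_neg, Real.exp_nat_mul, Real.exp_log ht0]
  rw [← Finset.sum_mul, hexp, mul_comm]
  push_cast
  ring
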